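/- arXiv:0811.4003 — 2 statements merged into one kernel-verified Lean document; each statement's English description precedes it below -/
import Mathlib

section
/- Let n ≥ 1, let U be a 2^n × 2^n unitary, let 0 < α ≤ 1, let ρ_DQC1 = 2^{−(n+1)} · [[I_{2^n}, α U†],[α U, I_{2^n}]], and suppose τ = Tr(U)/2^n ≠ 0. For θ ∈ ℝ set χ = π/2 − arg(τ) and U_A = [[cos θ, e^{iχ} sin θ],[−e^{−iχ} sin θ, cos θ]]. Then U_A commutes with the reduced state Tr_B(ρ_DQC1) = (1/2)[[1, α·conj(τ)],[α τ, 1]], and with ρ_f = (U_A ⊗ I_{2^n}) ρ_DQC1 (U_A ⊗ I_{2^n})†, the LNU shift satisfies Tr(ρ_DQC1²) − Tr(ρ_DQC1 · ρ_f) = (α² sin²θ / 2^{n+1}) · (1 − Re((conj(τ)/|τ|)² · Tr(U²))/2^n). -/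
set_option maxHeartbeats 2000000

open Matrix Kronecker

/-- The DQC1 state on n+1 qubits, indexed by Fin 2 × Fin 2ⁿ (control qubit first):
ρ = 2^{-(n+1)} · [[I, αUᴴ],[αU, I]]. -/
noncomputable def dqc1State (n : ℕ) (α : ℝ) (U : Matrix (Fin (2 ^ n)) (Fin (2 ^ n)) ℂ) :
    Matrix (Fin 2 × Fin (2 ^ n)) (Fin 2 × Fin (2 ^ n)) ℂ :=
  Matrix.of fun p q =>
    ((2 : ℂ) ^ (n + 1))⁻¹ *
      (![![(1 : Matrix (Fin (2 ^ n)) (Fin (2 ^ n)) ℂ), (α : ℂ) • Uᴴ],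
         ![(α : ℂ) • U, (1 : Matrix (Fin (2 ^ n)) (Fin (2 ^ n)) ℂ)]] p.1 q.1) p.2 q.2

/-- Partial trace over the second tensor factor. -/
noncomputable def ptraceB {M N : ℕ} (ρ : Matrix (Fin M × Fin N) (Fin M × Fin N) ℂ) :
    Matrix (Fin M) (Fin M) ℂ :=
  Matrix.of fun i j => ∑ k, ρ (i, k) (j, k)

lemma kron_conjT {l m p q : Type*} [Fintype l] [Fintype m] [Fintype p] [Fintype q]
    (A : Matrix l m ℂ) (B : Matrix p q ℂ) :
    (A ⊗ₖ B)ᴴ = Aᴴ ⊗ₖ Bᴴ := by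
  ext ⟨i,k⟩ ⟨j,l⟩
  simp [conjTranspose_apply, kroneckerMap_apply]

lemma exp_chi (τ : ℂ) (hτne : τ ≠ 0) (χ : ℝ) (hχ : χ = Real.pi / 2 - Complex.arg τ) :
    Complex.exp (χ * Complex.I) = Complex.I * ((starRingEnd ℂ) τ / (‖τ‖ : ℂ)) := by
  have habs : (‖τ‖ : ℂ) ≠ 0 := by
    simpa using (norm_ne_zero_iff.mpr hτne)
  have h1 : (‖τ‖ : ℂ) * Complex.exp (Complex.arg τ * Complex.I) = τ :=
    Complex.norm_mul_exp_arg_mul_I τ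
  have hc : (starRingEnd ℂ) (Complex.exp (Complex.arg τ * Complex.I))
      = Complex.exp (-(Complex.arg τ * Complex.I)) := by
    rw [← Complex.exp_conj]; congr 1; simp [Complex.conj_ofReal]
  have h2 : Complex.exp (-(Complex.arg τ * Complex.I))
      = (starRingEnd ℂ) τ / (‖τ‖ : ℂ) := by
    have := congrArg (starRingEnd ℂ) h1
    rw [_root_.map_mul, Complex.conj_ofReal, hc] at this
    field_simp [← this]
    linear_combination this
  have hpi : Complex.exp ((Real.pi/2 : ℝ) * Complex.I) = Complex.I := by
    rw [Complex.exp_mul_I]; simp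
  rw [hχ]
  push_cast [sub_mul] at hpi ⊢
  rw [Complex.exp_sub, hpi, ← h2, Complex.exp_neg]
  ring

lemma dqc1_eq (n : ℕ) (α : ℝ) (U : Matrix (Fin (2 ^ n)) (Fin (2 ^ n)) ℂ) :
    dqc1State n α U = ((2 : ℂ) ^ (n + 1))⁻¹ •
      ((1 : Matrix (Fin 2 × Fin (2^n)) (Fin 2 × Fin (2^n)) ℂ) +
        (α : ℂ) • (single (0 : Fin 2) (1 : Fin 2) (1:ℂ) ⊗ₖ Uᴴ
          + single (1 : Fin 2) (0 : Fin 2) (1:ℂ) ⊗ₖ U)) := by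
  ext ⟨i, k⟩ ⟨j, l⟩
  fin_cases i <;> fin_cases j <;>
    simp [dqc1State, kroneckerMap_apply, Matrix.one_apply, single,
      Prod.ext_iff, mul_add, Matrix.smul_apply]

/-- With χ = π/2 − arg τ, the unitary U_A = [[cosθ, e^{iχ}sinθ],[−e^{−iχ}sinθ, cosθ]]
commutes with the reduced control-qubit state ½[[1, α·conj τ],[ατ, 1]] of the DQC1 state,
and the LNU shift it induces is
Tr(ρ²) − Tr(ρρ_f) = (α²sin²θ/2^{n+1})(1 − Re((conj τ/|τ|)²·Tr(U²))/2ⁿ). -/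
theorem dqc1_lnu_shift (n : ℕ) (hn : 1 ≤ n) (α : ℝ) (hα0 : 0 < α) (hα1 : α ≤ 1)
    (U : Matrix (Fin (2 ^ n)) (Fin (2 ^ n)) ℂ)
    (hU : U ∈ Matrix.unitaryGroup (Fin (2 ^ n)) ℂ)
    (τ : ℂ) (hτ : τ = U.trace / 2 ^ n) (hτne : τ ≠ 0)
    (θ χ : ℝ) (hχ : χ = Real.pi / 2 - Complex.arg τ)
    (UA : Matrix (Fin 2) (Fin 2) ℂ)
    (hUA : UA = !![(Real.cos θ : ℂ), Complex.exp (χ * Complex.I) * Real.sin θ;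
                   -(Complex.exp (-(χ * Complex.I)) * Real.sin θ), (Real.cos θ : ℂ)])
    (ρf : Matrix (Fin 2 × Fin (2 ^ n)) (Fin 2 × Fin (2 ^ n)) ℂ)
    (hρf : ρf = (UA ⊗ₖ (1 : Matrix (Fin (2 ^ n)) (Fin (2 ^ n)) ℂ)) * dqc1State n α U *
      (UA ⊗ₖ (1 : Matrix (Fin (2 ^ n)) (Fin (2 ^ n)) ℂ))ᴴ) :
    ptraceB (dqc1State n α U) =
        (2 : ℂ)⁻¹ • !![1, (α : ℂ) * (starRingEnd ℂ) τ; (α : ℂ) * τ, 1] ∧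
      UA * ptraceB (dqc1State n α U) = ptraceB (dqc1State n α U) * UA ∧
      (dqc1State n α U * dqc1State n α U).trace - (dqc1State n α U * ρf).trace =
        (((α ^ 2 * Real.sin θ ^ 2 / 2 ^ (n + 1)) *
          (1 - ((((starRingEnd ℂ) τ / (‖τ‖ : ℂ)) ^ 2 * (U * U).trace).re) / 2 ^ n)
          : ℝ) : ℂ) := by
  have hU1 : Uᴴ * U = 1 := by
    simpa [Matrix.star_eq_conjTranspose] using (Unitary.mem_iff.mp hU).1
  have hU2 : U * Uᴴ = 1 := by
    simpa [Matrix.star_eq_conjTranspose] using (Unitary.mem_iff.mp hU).2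
  have he := exp_chi τ hτne χ hχ
  have habs0 : (‖τ‖ : ℂ) ≠ 0 := by simpa using (norm_ne_zero_iff.mpr hτne)
  have hmc0 : (starRingEnd ℂ) τ * τ = (‖τ‖ : ℂ)^2 := by
    rw [mul_comm, Complex.mul_conj, ← Complex.sq_norm]; push_cast; ring
  have hen : Complex.exp (-((χ:ℂ) * Complex.I)) = -(Complex.I * (τ / (‖τ‖ : ℂ))) := by
    rw [Complex.exp_neg, he]
    apply inv_eq_of_mul_eq_one_right
    field_simp
    ring_nf
    rw [Complex.I_sq]
    linear_combination hmc0
  -- Part 1: the reduced state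
  have hpt : ptraceB (dqc1State n α U) =
      (2 : ℂ)⁻¹ • !![1, (α : ℂ) * (starRingEnd ℂ) τ; (α : ℂ) * τ, 1] := by
    have h2n : ((2:ℂ)^n) ≠ 0 := pow_ne_zero _ two_ne_zero
    have htrU : U.trace = τ * 2^n := by rw [hτ]; field_simp
    have htrU' : ∑ k, U k k = τ * 2^n := htrU
    ext i j
    fin_cases i <;> fin_cases j <;>
      simp [ptraceB, dqc1State, Matrix.one_apply, ← Finset.mul_sum,
        Matrix.conjTranspose_apply, Matrix.smul_apply, ← map_sum, htrU', map_ofNat,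
        pow_succ] <;>
    first
    | (field_simp; ring)
    | field_simp
    | skip
  refine ⟨hpt, ?_, ?_⟩
  -- Part 2: commutation
  · rw [hpt]
    ext i j
    fin_cases i <;> fin_cases j <;>
    · simp only [hUA, Matrix.mul_apply, Fin.sum_univ_two, Matrix.smul_apply,
        Matrix.cons_val', Matrix.cons_val_zero, Matrix.cons_val_one, Matrix.head_cons,
        Matrix.head_fin_const, Matrix.empty_val', Matrix.cons_val_fin_one, Matrix.of_apply, Fin.zero_eta, Fin.mk_one,
        smul_eq_mul, he, hen]
      field_simp
      all_goals ring
  -- Part 3: the LNU shift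
  have habs : (‖τ‖ : ℂ) ≠ 0 := by simpa using (norm_ne_zero_iff.mpr hτne)
  have hmc : (starRingEnd ℂ) τ * τ = (‖τ‖ : ℂ)^2 := by
    rw [mul_comm, Complex.mul_conj, ← Complex.sq_norm]; push_cast; ring
  have hce : (starRingEnd ℂ) (Complex.exp ((χ:ℂ) * Complex.I)) = Complex.exp (-((χ:ℂ) * Complex.I)) := by
    rw [← Complex.exp_conj]; congr 1; simp [Complex.conj_ofReal]
  have hcen : (starRingEnd ℂ) (Complex.exp (-((χ:ℂ) * Complex.I))) = Complex.exp (((χ:ℂ) * Complex.I)) := by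
    rw [← Complex.exp_conj]; congr 1; simp [Complex.conj_ofReal]
  have hsc : (Real.sin θ : ℂ)^2 + (Real.cos θ : ℂ)^2 = 1 := by
    exact_mod_cast congrArg (fun x : ℝ => (x:ℂ)) (Real.sin_sq_add_cos_sq θ)
  have hee : Complex.exp ((χ:ℂ) * Complex.I) * Complex.exp (-((χ:ℂ) * Complex.I)) = 1 := by
    rw [← Complex.exp_add]; simp
  set E01 := single (0 : Fin 2) (1 : Fin 2) (1:ℂ) with hE01
  set E10 := single (1 : Fin 2) (0 : Fin 2) (1:ℂ) with hE10
  set X := E01 ⊗ₖ Uᴴ + E10 ⊗ₖ U with hX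
  set V := UA ⊗ₖ (1 : Matrix (Fin (2 ^ n)) (Fin (2 ^ n)) ℂ) with hV
  have hVH : Vᴴ = UAᴴ ⊗ₖ (1 : Matrix (Fin (2 ^ n)) (Fin (2 ^ n)) ℂ) := by
    rw [hV, kron_conjT, conjTranspose_one]
  -- UA unitary
  have hUAu : UA * UAᴴ = 1 := by
    ext i j
    fin_cases i <;> fin_cases j <;>
      simp [hUA, Matrix.mul_apply, Fin.sum_univ_two, Matrix.conjTranspose_apply,
        Matrix.one_apply, hce, hcen, ← Complex.ofReal_sin, ← Complex.ofReal_cos,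
        Complex.conj_ofReal] <;>
      first
      | linear_combination ((Real.sin θ : ℂ))^2 * hee + hsc
      | ring
  have hUAu' : UAᴴ * UA = 1 := mul_eq_one_comm.mp hUAu
  have hVV : V * Vᴴ = 1 := by
    rw [hVH, hV, ← mul_kronecker_mul, hUAu, Matrix.mul_one, one_kronecker_one]
  have hVV' : Vᴴ * V = 1 := by
    rw [hVH, hV, ← mul_kronecker_mul, hUAu', Matrix.mul_one, one_kronecker_one]
  -- traces
  have htr1 : (1 : Matrix (Fin 2 × Fin (2^n)) (Fin 2 × Fin (2^n)) ℂ).trace = (2:ℂ)^(n+1) := by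
    simp [Matrix.trace_one]; ring
  have htrId : (1 : Matrix (Fin (2^n)) (Fin (2^n)) ℂ).trace = (2:ℂ)^n := by
    simp [Matrix.trace_one]
  have htX : X.trace = 0 := by
    rw [hX, trace_add, trace_kronecker, trace_kronecker, hE01, hE10,
      Matrix.trace_single_eq_of_ne _ _ _ (by decide),
      Matrix.trace_single_eq_of_ne _ _ _ (by decide)]
    ring
  have htXX : (X*X).trace = (2:ℂ)^(n+1) := by
    rw [hX]
    rw [add_mul, mul_add, mul_add, ← mul_kronecker_mul, ← mul_kronecker_mul,
      ← mul_kronecker_mul, ← mul_kronecker_mul]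
    rw [trace_add, trace_add, trace_add, trace_kronecker, trace_kronecker,
      trace_kronecker, trace_kronecker, hU1, hU2, htrId]
    have e1 : E01 * E01 = 0 := by
      rw [hE01]; apply single_mul_single_of_ne; decide
    have e2 : E01 * E10 = single (0:Fin 2) (0:Fin 2) (1:ℂ) := by
      rw [hE01, hE10, single_mul_single_same]; norm_num
    have e3 : E10 * E01 = single (1:Fin 2) (1:Fin 2) (1:ℂ) := by
      rw [hE01, hE10, single_mul_single_same]; norm_num
    have e4 : E10 * E10 = 0 := by
      rw [hE10]; apply single_mul_single_of_ne; decide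
    rw [e1, e2, e3, e4, Matrix.trace_zero, Matrix.trace_single_eq_same,
      Matrix.trace_single_eq_same]
    ring
  -- the key kronecker trace
  have hXV : X * V = (E01 * UA) ⊗ₖ Uᴴ + (E10 * UA) ⊗ₖ U := by
    rw [hX, hV, add_mul, ← mul_kronecker_mul, ← mul_kronecker_mul, Matrix.mul_one, Matrix.mul_one]
  have hXVc : X * Vᴴ = (E01 * UAᴴ) ⊗ₖ Uᴴ + (E10 * UAᴴ) ⊗ₖ U := by
    rw [hX, hVH, add_mul, ← mul_kronecker_mul, ← mul_kronecker_mul, Matrix.mul_one, Matrix.mul_one]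
  have c1 : ((E01 * UA) * (E01 * UAᴴ)).trace = -((Complex.exp (-((χ:ℂ) * Complex.I)))^2 * (Real.sin θ:ℂ)^2) := by
    rw [hE01]
    simp [hUA, Matrix.trace, Matrix.diag, Matrix.mul_apply, Fin.sum_univ_two,
      Matrix.single, Matrix.conjTranspose_apply, hce, hcen, ← Complex.ofReal_sin,
      ← Complex.ofReal_cos, Complex.conj_ofReal]
    ring
  have c2 : ((E01 * UA) * (E10 * UAᴴ)).trace = (Real.cos θ:ℂ)^2 := by
    rw [hE01, hE10]
    simp [hUA, Matrix.trace, Matrix.diag, Matrix.mul_apply, Fin.sum_univ_two,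
      Matrix.single, Matrix.conjTranspose_apply, hce, hcen, ← Complex.ofReal_sin,
      ← Complex.ofReal_cos, Complex.conj_ofReal]
    ring
  have c3 : ((E10 * UA) * (E01 * UAᴴ)).trace = (Real.cos θ:ℂ)^2 := by
    rw [hE01, hE10]
    simp [hUA, Matrix.trace, Matrix.diag, Matrix.mul_apply, Fin.sum_univ_two,
      Matrix.single, Matrix.conjTranspose_apply, hce, hcen, ← Complex.ofReal_sin,
      ← Complex.ofReal_cos, Complex.conj_ofReal]
    ring
  have c4 : ((E10 * UA) * (E10 * UAᴴ)).trace = -((Complex.exp (((χ:ℂ) * Complex.I)))^2 * (Real.sin θ:ℂ)^2) := by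
    rw [hE10]
    simp [hUA, Matrix.trace, Matrix.diag, Matrix.mul_apply, Fin.sum_univ_two,
      Matrix.single, Matrix.conjTranspose_apply, hce, hcen, ← Complex.ofReal_sin,
      ← Complex.ofReal_cos, Complex.conj_ofReal]
    ring
  have htrUHUH : (Uᴴ * Uᴴ).trace = (starRingEnd ℂ) ((U*U).trace) := by
    rw [← Matrix.conjTranspose_mul, Matrix.trace_conjTranspose]
    simp [Complex.star_def]
  have he2 : (Complex.exp ((χ:ℂ) * Complex.I))^2
      = -(((starRingEnd ℂ) τ / (‖τ‖ : ℂ)))^2 := by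
    rw [he, mul_pow, Complex.I_sq]; ring
  have hen2 : (Complex.exp (-((χ:ℂ) * Complex.I)))^2 = -((τ / (‖τ‖ : ℂ)))^2 := by
    rw [hen]; rw [neg_pow, mul_pow, Complex.I_sq]; ring
  set T : ℂ := (U*U).trace with hT
  set P : ℂ := ((starRingEnd ℂ) τ / (‖τ‖ : ℂ))^2 * T with hP
  set Q : ℂ := (τ / (‖τ‖ : ℂ))^2 * ((starRingEnd ℂ) T) with hQ
  have hK : ((X*V) * (X*Vᴴ)).trace =
      (Real.sin θ:ℂ)^2 * Q + 2 * (Real.cos θ:ℂ)^2 * (2:ℂ)^n + (Real.sin θ:ℂ)^2 * P := by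
    rw [hXV, hXVc, add_mul, mul_add, mul_add, ← mul_kronecker_mul, ← mul_kronecker_mul,
      ← mul_kronecker_mul, ← mul_kronecker_mul, trace_add, trace_add, trace_add,
      trace_kronecker, trace_kronecker, trace_kronecker, trace_kronecker,
      c1, c2, c3, c4, hU1, hU2, htrId, htrUHUH, he2, hen2, hP, hQ, hT]
    ring
  -- trace(d*d)
  set s : ℂ := ((2:ℂ)^(n+1))⁻¹ with hs
  have hdd : (dqc1State n α U * dqc1State n α U).trace
      = s^2 * ((2:ℂ)^(n+1) + (α:ℂ)^2 * (2:ℂ)^(n+1)) := by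
    rw [dqc1_eq]
    have expand : (s • ((1 : Matrix (Fin 2 × Fin (2^n)) (Fin 2 × Fin (2^n)) ℂ) + (α:ℂ) • X)) *
        (s • (1 + (α:ℂ) • X)) = (s*s) • (1 + (α:ℂ) • X + (α:ℂ) • X + ((α:ℂ)*(α:ℂ)) • (X * X)) := by
      simp only [smul_mul_assoc, mul_smul_comm, smul_smul, add_mul, mul_add,
        one_mul, mul_one]
      module
    rw [← hX, ← hs, expand]
    simp only [trace_smul, trace_add, htr1, htX, htXX, smul_eq_mul]
    ring
  -- trace(d*ρf)
  have hdf : (dqc1State n α U * ρf).trace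
      = s^2 * ((2:ℂ)^(n+1) + (α:ℂ)^2 * ((X*V) * (X*Vᴴ)).trace) := by
    rw [hρf, dqc1_eq, ← hX, ← hs]
    have expand : (s • ((1 : Matrix (Fin 2 × Fin (2^n)) (Fin 2 × Fin (2^n)) ℂ) + (α:ℂ) • X)) *
        (V * (s • (1 + (α:ℂ) • X)) * Vᴴ)
        = (s*s) • ((V * Vᴴ) + (α:ℂ) • (V * (X * Vᴴ)) + (α:ℂ) • ((X * V) * Vᴴ)
            + ((α:ℂ)*(α:ℂ)) • ((X * V) * (X * Vᴴ))) := by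
      simp only [smul_mul_assoc, mul_smul_comm, smul_smul, add_mul, mul_add,
        one_mul, mul_one, Matrix.mul_assoc]
      module
    rw [expand]
    simp only [trace_smul, trace_add, hVV, htr1, smul_eq_mul]
    have t2 : (V * (X * Vᴴ)).trace = 0 := by
      rw [Matrix.trace_mul_comm, Matrix.mul_assoc, hVV', Matrix.mul_one, htX]
    have t3 : ((X * V) * Vᴴ).trace = 0 := by
      rw [Matrix.mul_assoc, hVV, Matrix.mul_one, htX]
    rw [t2, t3]
    ring
  rw [hdd, hdf, hK]
  have h2n : ((2:ℂ)^n) ≠ 0 := pow_ne_zero _ two_ne_zero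
  have hPQ : (starRingEnd ℂ) P = Q := by
    rw [hP, hQ]
    simp [_root_.map_mul, map_pow, map_div₀, Complex.conj_ofReal]
  have hre : (((((starRingEnd ℂ) τ / (‖τ‖ : ℂ)) ^ 2 * (U * U).trace).re : ℝ) : ℂ)
      = (P + Q) / 2 := by
    rw [← hT, ← hP, ← hPQ, Complex.add_conj]
    push_cast
    ring
  simp only [Complex.ofReal_mul, Complex.ofReal_div, Complex.ofReal_sub, Complex.ofReal_one,
    Complex.ofReal_pow, Complex.ofReal_ofNat, hre]
  have hcos2 : (Real.cos θ : ℂ)^2 = 1 - (Real.sin θ : ℂ)^2 := by linear_combination hsc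
  set y : ℂ := (2:ℂ)^n with hy
  have hpow : ((2:ℂ)^(n+1)) = 2 * y := by rw [pow_succ]; ring
  rw [hs]
  simp only [hcos2, hpow]
  field_simp
  rw [show ((P.re:ℝ):ℂ) = (P+Q)/2 from hre]
  ring
end

section
/- Let n ≥ 1, let U be a 2^n × 2^n unitary with entries u_{jk}, let α ∈ ℝ, let ρ_DQC1 = 2^{−(n+1)} · [[I_{2^n}, α U†],[α U, I_{2^n}]] on ℂ² ⊗ ℂ^{2^n}, and suppose τ = Tr(U)/2^n ≠ 0 with φ = arg(τ). Let Π_± = (1/2)[[1, ±e^{−iφ}],[±e^{iφ}, 1]] (the spectral projectors of the reduced control-qubit state when ατ ≠ 0) and let E_j be the 2^n × 2^n matrix with a 1 in entry (j,j) and zeros elsewhere. Then Σ_{s ∈ {+,−}} Σ_{j=1}^{2^n} (Π_s ⊗ E_j) ρ_DQC1 (Π_s ⊗ E_j) = 2^{−(n+1)} · [[I_{2^n}, α D],[α D†, I_{2^n}]], where D is the diagonal matrix with entries d_j = (conj(u_{jj}) + e^{−2iφ} u_{jj})/2. -/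
open Matrix Kronecker

private lemma dqc1_key (n : ℕ) (α : ℝ) (U : Matrix (Fin (2 ^ n)) (Fin (2 ^ n)) ℂ)
    (P : Matrix (Fin 2) (Fin 2) ℂ) (j : Fin (2^n)) (a b : Fin 2) (x y : Fin (2^n)) :
    ((P ⊗ₖ Matrix.single j j (1 : ℂ)) * dqc1State n α U *
        (P ⊗ₖ Matrix.single j j (1 : ℂ))) (a,x) (b,y)
    = (if j = x then 1 else 0) * (if j = y then 1 else 0) *
      ((P * (Matrix.of fun r s => dqc1State n α U (r, j) (s, j)) * P) a b) := by
  have h : ((P * (Matrix.of fun r s => dqc1State n α U (r, j) (s, j)) * P) a b)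
      = ∑ r : Fin 2, ∑ s : Fin 2, P a r * dqc1State n α U (r, j) (s, j) * P s b := by
    simp [Matrix.mul_apply, Fin.sum_univ_two]; ring
  rw [h]
  simp only [Matrix.mul_apply, Matrix.kroneckerMap_apply, Fintype.sum_prod_type,
    Matrix.single, Matrix.of_apply]
  simp only [mul_ite, ite_mul, mul_one, mul_zero, one_mul, zero_mul,
    Finset.sum_ite_eq, Finset.mem_univ, if_true, Finset.sum_ite_irrel, Finset.sum_const_zero]
  by_cases hx : j = x <;> by_cases hy : j = y <;>
    simp [hx, hy, ite_and, Finset.mul_sum, Finset.sum_mul, mul_comm, mul_assoc, mul_left_comm] <;>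
    split_ifs <;> ring

private lemma dqc1_twirl (φ : ℝ) (w u v : ℂ) :
    ((2 : ℂ)⁻¹ • !![1, Complex.exp (-(φ * Complex.I));
        Complex.exp (φ * Complex.I), 1]) * !![w, u; v, w] *
      ((2 : ℂ)⁻¹ • !![1, Complex.exp (-(φ * Complex.I));
        Complex.exp (φ * Complex.I), 1]) +
    ((2 : ℂ)⁻¹ • !![1, -Complex.exp (-(φ * Complex.I));
        -Complex.exp (φ * Complex.I), 1]) * !![w, u; v, w] *
      ((2 : ℂ)⁻¹ • !![1, -Complex.exp (-(φ * Complex.I));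
        -Complex.exp (φ * Complex.I), 1]) =
    !![w, (u + Complex.exp (-(2 * φ * Complex.I)) * v) / 2;
       (v + Complex.exp (2 * φ * Complex.I) * u) / 2, w] := by
  have hF2 : Complex.exp (-(2 * φ * Complex.I)) =
      Complex.exp (-(φ * Complex.I)) * Complex.exp (-(φ * Complex.I)) := by
    rw [show (-(2 * (φ : ℂ) * Complex.I)) = -(φ * Complex.I) + -(φ * Complex.I) by ring,
      Complex.exp_add]
  have hE2 : Complex.exp (2 * φ * Complex.I) =
      Complex.exp (φ * Complex.I) * Complex.exp (φ * Complex.I) := by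
    rw [show ((2 * (φ : ℂ) * Complex.I)) = φ * Complex.I + φ * Complex.I by ring,
      Complex.exp_add]
  have hEF : Complex.exp (φ * Complex.I) * Complex.exp (-(φ * Complex.I)) = 1 := by
    rw [← Complex.exp_add]; simp
  rw [hF2, hE2]
  generalize Complex.exp (φ * Complex.I) = E at hEF ⊢
  generalize Complex.exp (-(φ * Complex.I)) = F at hEF ⊢
  ext i j
  fin_cases i <;> fin_cases j <;>
    · simp [Matrix.mul_apply, Fin.sum_univ_two]
      first
        | ring1
        | linear_combination (w / 2) * hEF

set_option maxHeartbeats 800000 in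
/-- Dephasing the DQC1 state in the eigenbases of its reduced states: with
Π_± = ½[[1, ±e^{−iφ}],[±e^{iφ}, 1]] (φ = arg τ, τ = Tr(U)/2ⁿ ≠ 0) and E_j the
diagonal matrix units, Σ_{s,j} (Π_s ⊗ E_j) ρ (Π_s ⊗ E_j) = 2^{-(n+1)}[[I, αD],[αDᴴ, I]]
where D = diag(d_j), d_j = (conj(u_jj) + e^{−2iφ}u_jj)/2. -/
theorem dqc1_dephased_state (n : ℕ) (hn : 1 ≤ n) (α : ℝ)
    (U : Matrix (Fin (2 ^ n)) (Fin (2 ^ n)) ℂ)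
    (hU : U ∈ Matrix.unitaryGroup (Fin (2 ^ n)) ℂ)
    (τ : ℂ) (hτ : τ = U.trace / 2 ^ n) (hτne : τ ≠ 0)
    (φ : ℝ) (hφ : φ = Complex.arg τ)
    (Pp Pm : Matrix (Fin 2) (Fin 2) ℂ)
    (hPp : Pp = (2 : ℂ)⁻¹ • !![1, Complex.exp (-(φ * Complex.I));
                               Complex.exp (φ * Complex.I), 1])
    (hPm : Pm = (2 : ℂ)⁻¹ • !![1, -Complex.exp (-(φ * Complex.I));
                               -Complex.exp (φ * Complex.I), 1])
    (D : Matrix (Fin (2 ^ n)) (Fin (2 ^ n)) ℂ)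
    (hD : D = Matrix.diagonal fun j =>
      ((starRingEnd ℂ) (U j j) + Complex.exp (-(2 * φ * Complex.I)) * U j j) / 2) :
    ∑ j : Fin (2 ^ n),
        ((Pp ⊗ₖ Matrix.single j j (1 : ℂ)) * dqc1State n α U *
            (Pp ⊗ₖ Matrix.single j j (1 : ℂ)) +
          (Pm ⊗ₖ Matrix.single j j (1 : ℂ)) * dqc1State n α U *
            (Pm ⊗ₖ Matrix.single j j (1 : ℂ))) =
      Matrix.of fun p q =>
        ((2 : ℂ) ^ (n + 1))⁻¹ *
          (![![(1 : Matrix (Fin (2 ^ n)) (Fin (2 ^ n)) ℂ), (α : ℂ) • D],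
             ![(α : ℂ) • Dᴴ, (1 : Matrix (Fin (2 ^ n)) (Fin (2 ^ n)) ℂ)]] p.1 q.1) p.2 q.2 := by
  have hconjF2 : (starRingEnd ℂ) (Complex.exp (-(2 * φ * Complex.I))) =
      Complex.exp (2 * φ * Complex.I) := by
    rw [← Complex.exp_conj]
    congr 1
    rw [map_neg, _root_.map_mul, _root_.map_mul, Complex.conj_ofReal, Complex.conj_I,
      map_ofNat]
    ring
  ext ⟨a, x⟩ ⟨b, y⟩
  simp only [Matrix.sum_apply, Matrix.add_apply, dqc1_key, ite_mul, one_mul, zero_mul,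
    Finset.sum_add_distrib, Finset.sum_ite_eq', Finset.mem_univ, if_true]
  by_cases hxy : x = y
  · subst hxy
    rw [if_pos rfl, if_pos rfl, ← Matrix.add_apply, hPp, hPm]
    have hM : (Matrix.of fun r s => dqc1State n α U (r, x) (s, x)) =
        !![((2 : ℂ) ^ (n + 1))⁻¹, ((2 : ℂ) ^ (n + 1))⁻¹ * ((α : ℂ) * (starRingEnd ℂ) (U x x));
           ((2 : ℂ) ^ (n + 1))⁻¹ * ((α : ℂ) * U x x), ((2 : ℂ) ^ (n + 1))⁻¹] := by
      ext r s
      fin_cases r <;> fin_cases s <;>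
        simp [dqc1State, Matrix.conjTranspose_apply, mul_comm, mul_assoc, mul_left_comm]
    rw [hM, dqc1_twirl]
    fin_cases a <;> fin_cases b <;>
      · simp [hD, Matrix.smul_apply, Matrix.one_apply_eq, Matrix.diagonal_apply_eq,
          Matrix.conjTranspose_apply, map_div₀, _root_.map_mul, hconjF2, Complex.conj_conj]
        try ring
  · rw [if_neg hxy, if_neg hxy]
    have hD' : D x y = 0 := by
      rw [hD, Matrix.diagonal_apply_ne _ hxy]
    have hD2 : D y x = 0 := by
      rw [hD, Matrix.diagonal_apply_ne _ (Ne.symm hxy)]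
    fin_cases a <;> fin_cases b <;>
      simp [Matrix.one_apply, Matrix.conjTranspose_apply, hxy, hD', hD2]
end
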